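/- Assume chi = q2/(d*gamma) > 1 and set beta = chi^{2/(d*gamma*(chi-1))}. For h_0 > 0 and an integer L >= 1 define G(L, h_0) = h_0^{d*gamma*(chi-1)} * ( sqrt(V_0)*h_0^{-q2/2} + sqrt(Q_S)*(1 - beta^{L*(d*gamma - q2)/2})/(beta^{-d*gamma/2} - beta^{-q2/2}) )^2. Then, as L tends to infinity, G(L, h_0) tends to h_0^{d*gamma*(chi-1)} * ( sqrt(V_0)*h_0^{-q2/2} + sqrt(Q_S) * chi^{chi/(chi-1)}/(chi-1) )^2; moreover, if h_0 = (V_0/Q_S)^{1/q2} * chi^{2/(d*gamma*(1-chi))}, then this limit equals V_0^{(chi-1)/chi} * Q_S^{1/chi} * chi^{2*chi/(chi-1)} * (chi-1)^{-2}. -/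

import Mathlib

open Filter

/-- Limit as `L → ∞` of the normalized work of geometric MLMC hierarchies for
`χ > 1`, and the choice of `h₀` for which this limit equals the constant `C₂`
of the optimal non-geometric hierarchies. -/
theorem mlmc_geometric_work_limit_chi_gt_one
    (d γ q2 χ Q_S V0 β : ℝ)
    (hd : 0 < d) (hγ : 0 < γ) (hq2 : 0 < q2)
    (hχ : χ = q2 / (d * γ)) (hχ1 : 1 < χ)
    (hQS : 0 < Q_S) (hV0 : 0 < V0)
    (hβ : β = χ ^ (2 / (d * γ * (χ - 1))))
    (G : ℕ → ℝ → ℝ)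
    (hG : ∀ L : ℕ, 1 ≤ L → ∀ h0 : ℝ, 0 < h0 → G L h0 =
      h0 ^ (d * γ * (χ - 1))
        * (Real.sqrt V0 * h0 ^ (-q2 / 2)
            + Real.sqrt Q_S * (1 - β ^ ((L : ℝ) * (d * γ - q2) / 2))
                / (β ^ (-(d * γ) / 2) - β ^ (-q2 / 2))) ^ 2) :
    (∀ h0 : ℝ, 0 < h0 →
      Tendsto (fun L : ℕ => G L h0) atTop
        (nhds (h0 ^ (d * γ * (χ - 1))
          * (Real.sqrt V0 * h0 ^ (-q2 / 2)
              + Real.sqrt Q_S * χ ^ (χ / (χ - 1)) / (χ - 1)) ^ 2))) ∧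
    (∀ h0 : ℝ, h0 = (V0 / Q_S) ^ (1 / q2) * χ ^ (2 / (d * γ * (1 - χ))) →
      h0 ^ (d * γ * (χ - 1))
          * (Real.sqrt V0 * h0 ^ (-q2 / 2)
              + Real.sqrt Q_S * χ ^ (χ / (χ - 1)) / (χ - 1)) ^ 2
        = V0 ^ ((χ - 1) / χ) * Q_S ^ (1 / χ) * χ ^ (2 * χ / (χ - 1))
            * (χ - 1) ^ (-2 : ℝ)) := by
  have ha : (0:ℝ) < d * γ := mul_pos hd hγ
  have hχ0 : (0:ℝ) < χ := lt_trans one_pos hχ1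
  have hc : (0:ℝ) < χ - 1 := sub_pos.2 hχ1
  have hq2a : q2 = d * γ * χ := by rw [hχ]; field_simp
  have hβ0 : (0:ℝ) < β := by
    rw [hβ]; exact Real.rpow_pos_of_pos hχ0 _
  have hβ1 : 1 < β := by
    rw [hβ]
    exact (Real.one_lt_rpow_iff_of_pos hχ0).2 (Or.inl ⟨hχ1, by positivity⟩)
  -- β to χ conversion
  have hβpow : ∀ s : ℝ, β ^ s = χ ^ (2 / (d * γ * (χ - 1)) * s) := by
    intro s
    rw [hβ, ← Real.rpow_mul hχ0.le]
  set t : ℝ := χ ^ (χ / (χ - 1)) with ht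
  have ht0 : 0 < t := Real.rpow_pos_of_pos hχ0 _
  have hDa : β ^ (-(d * γ) / 2) = χ ^ (-1 / (χ - 1)) := by
    rw [hβpow]
    congr 1
    field_simp
  have hDb : β ^ (-q2 / 2) = χ ^ (-χ / (χ - 1)) := by
    rw [hβpow, hq2a]
    congr 1
    field_simp
  have hDt : (β ^ (-(d * γ) / 2) - β ^ (-q2 / 2)) * t = χ - 1 := by
    rw [hDa, hDb, ht, sub_mul, ← Real.rpow_add hχ0, ← Real.rpow_add hχ0]
    have h1 : -1 / (χ - 1) + χ / (χ - 1) = 1 := by field_simp; ring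
    have h2 : -χ / (χ - 1) + χ / (χ - 1) = 0 := by ring
    rw [h1, h2, Real.rpow_one, Real.rpow_zero]
  have hD0 : β ^ (-(d * γ) / 2) - β ^ (-q2 / 2) ≠ 0 := by
    intro h
    rw [h, zero_mul] at hDt
    linarith
  -- the key scalar identity for the limit value
  have hkey : Real.sqrt Q_S * (1 - 0) / (β ^ (-(d * γ) / 2) - β ^ (-q2 / 2))
      = Real.sqrt Q_S * t / (χ - 1) := by
    rw [sub_zero, mul_one]
    rw [div_eq_div_iff hD0 hc.ne']
    calc Real.sqrt Q_S * (χ - 1)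
        = Real.sqrt Q_S * ((β ^ (-(d * γ) / 2) - β ^ (-q2 / 2)) * t) := by rw [hDt]
      _ = Real.sqrt Q_S * t * (β ^ (-(d * γ) / 2) - β ^ (-q2 / 2)) := by ring
  constructor
  · intro h0 hh0
    set r : ℝ := β ^ ((d * γ - q2) / 2) with hr
    have hr0 : 0 < r := Real.rpow_pos_of_pos hβ0 _
    have hr1 : r < 1 := by
      apply Real.rpow_lt_one_of_one_lt_of_neg hβ1
      have : d * γ < q2 := by
        rw [hq2a]
        nlinarith
      linarith
    have hlim : Tendsto (fun L : ℕ => r ^ L) atTop (nhds 0) :=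
      tendsto_pow_atTop_nhds_zero_of_lt_one hr0.le hr1
    have hF : Tendsto (fun L : ℕ =>
        h0 ^ (d * γ * (χ - 1))
          * (Real.sqrt V0 * h0 ^ (-q2 / 2)
            + Real.sqrt Q_S * (1 - r ^ L)
                / (β ^ (-(d * γ) / 2) - β ^ (-q2 / 2))) ^ 2) atTop
        (nhds (h0 ^ (d * γ * (χ - 1))
          * (Real.sqrt V0 * h0 ^ (-q2 / 2)
            + Real.sqrt Q_S * (1 - (0:ℝ))
                / (β ^ (-(d * γ) / 2) - β ^ (-q2 / 2))) ^ 2)) := by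
      apply Tendsto.const_mul
      apply Tendsto.pow
      apply Tendsto.const_add
      apply Tendsto.div_const
      exact (tendsto_const_nhds.sub hlim).const_mul _
    have heq : (fun L : ℕ =>
        h0 ^ (d * γ * (χ - 1))
          * (Real.sqrt V0 * h0 ^ (-q2 / 2)
            + Real.sqrt Q_S * (1 - r ^ L)
                / (β ^ (-(d * γ) / 2) - β ^ (-q2 / 2))) ^ 2)
        =ᶠ[atTop] (fun L : ℕ => G L h0) := by
      filter_upwards [eventually_ge_atTop 1] with L hL
      rw [hG L hL h0 hh0]
      have : β ^ ((L : ℝ) * (d * γ - q2) / 2) = r ^ L := by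
        rw [hr, show (L : ℝ) * (d * γ - q2) / 2 = (d * γ - q2) / 2 * (L : ℝ) by ring,
          Real.rpow_mul hβ0.le, Real.rpow_natCast]
      rw [this]
    have := hF.congr' heq
    rwa [hkey] at this
  · intro h0 hh0
    set P : ℝ := (V0 / Q_S) ^ (1 / q2) with hP
    set C : ℝ := χ ^ (2 / (d * γ * (1 - χ))) with hC
    have hVQ : (0:ℝ) < V0 / Q_S := div_pos hV0 hQS
    have hP0 : 0 < P := Real.rpow_pos_of_pos hVQ _
    have hC0 : 0 < C := Real.rpow_pos_of_pos hχ0 _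
    have h1c : (1:ℝ) - χ ≠ 0 := by intro h; linarith
    have h1 : h0 ^ (d * γ * (χ - 1)) = (V0 / Q_S) ^ ((χ - 1) / χ) * χ ^ (-2 : ℝ) := by
      rw [hh0, Real.mul_rpow hP0.le hC0.le, hP, hC, ← Real.rpow_mul hVQ.le,
        ← Real.rpow_mul hχ0.le]
      congr 2
      · rw [hq2a]; field_simp; try ring
      · field_simp
        try ring
    have h2 : h0 ^ (-q2 / 2) = (V0 / Q_S) ^ (-(1 / 2) : ℝ) * t := by
      rw [hh0, Real.mul_rpow hP0.le hC0.le, hP, hC, ← Real.rpow_mul hVQ.le,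
        ← Real.rpow_mul hχ0.le, ht]
      congr 2
      · field_simp; try ring
      · rw [hq2a]; field_simp; try ring
    have h3 : Real.sqrt V0 * (V0 / Q_S) ^ (-(1 / 2) : ℝ) = Real.sqrt Q_S := by
      rw [Real.sqrt_eq_rpow, Real.sqrt_eq_rpow, Real.rpow_neg hVQ.le,
        Real.div_rpow hV0.le hQS.le]
      have hv : (0:ℝ) < V0 ^ ((1:ℝ)/2) := Real.rpow_pos_of_pos hV0 _
      field_simp
    rw [h1, h2, ← mul_assoc, h3]
    have hbr : Real.sqrt Q_S * t + Real.sqrt Q_S * t / (χ - 1)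
        = Real.sqrt Q_S * t * χ / (χ - 1) := by
      field_simp
      try ring
    rw [hbr]
    have hsq : (Real.sqrt Q_S * t * χ / (χ - 1)) ^ 2
        = Q_S * (t * t) * χ ^ 2 / (χ - 1) ^ 2 := by
      rw [div_pow]
      congr 1
      rw [mul_pow, mul_pow, Real.sq_sqrt hQS.le, sq]
      try ring
    rw [hsq]
    have htt : t * t = χ ^ (2 * χ / (χ - 1)) := by
      rw [ht, ← Real.rpow_add hχ0]
      congr 1
      ring
    have hχ2 : χ ^ (-2 : ℝ) * χ ^ (2 : ℕ) = 1 := by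
      rw [← Real.rpow_natCast χ 2, ← Real.rpow_add hχ0]
      norm_num
    have hdiv : (V0 / Q_S) ^ ((χ - 1) / χ) * Q_S = V0 ^ ((χ - 1) / χ) * Q_S ^ (1 / χ) := by
      rw [Real.div_rpow hV0.le hQS.le]
      rw [div_mul_eq_mul_div, mul_div_assoc]
      congr 1
      rw [div_eq_iff (Real.rpow_pos_of_pos hQS _).ne', ← Real.rpow_add hQS]
      have h : (1:ℝ) / χ + (χ - 1) / χ = 1 := by field_simp; ring
      rw [h, Real.rpow_one]
    have hneg2 : (χ - 1) ^ (-2 : ℝ) = ((χ - 1) ^ (2:ℕ))⁻¹ := by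
      rw [← Real.rpow_natCast (χ - 1) 2, ← Real.rpow_neg hc.le]
      norm_num
    rw [htt, hneg2]
    field_simp
    calc Q_S * χ ^ 2 * (V0 / Q_S) ^ ((χ - 1) / χ) * χ ^ (-2 : ℝ)
        = ((V0 / Q_S) ^ ((χ - 1) / χ) * Q_S)
            * (χ ^ (-2 : ℝ) * χ ^ (2:ℕ)) := by ring
      _ = V0 ^ ((χ - 1) / χ) * Q_S ^ (1 / χ) := by
          rw [hdiv, hχ2, mul_one]
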